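/- Let T ∈ B(H) be left invertible and expansive (β₁(T) ≥ 0). Then for every x ∈ H, Σ_{i=1}^∞ ⟨β₁(T) L_T^i x, L_T^i x⟩ ≤ ‖x‖², i.e., Σ_{i=1}^∞ (L_T*)^i β₁(T) L_T^i ≤ I. -/

import Mathlib

open ContinuousLinearMap

/-- The canonical left inverse `L_T = (T*T)⁻¹ T*` of a left invertible operator `T`. -/
noncomputable def leftInv {H : Type*} [NormedAddCommGroup H] [InnerProductSpace ℂ H]
    [CompleteSpace H] (T : H →L[ℂ] H) : H →L[ℂ] H :=
  Ring.inverse (adjoint T * T) * adjoint T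

/-- If `T` is left invertible and expansive (`β₁(T) = T*T - I ≥ 0`), then for every `x`,
`Σ_{i=1}^∞ ⟨β₁(T) L_T^i x, L_T^i x⟩ ≤ ‖x‖²`, i.e. `Σ_{i=1}^∞ (L_T*)^i β₁(T) L_T^i ≤ I`. -/
theorem expansive_defect_series_le {H : Type*} [NormedAddCommGroup H]
    [InnerProductSpace ℂ H] [CompleteSpace H] (T : H →L[ℂ] H)
    (hT : IsUnit (adjoint T * T)) (hexp : ∀ x : H, ‖x‖ ≤ ‖T x‖) :
    ∀ x : H,
      (∑' i : ℕ,
        ((inner ℂ (((adjoint T * T - 1)) ((leftInv T ^ (i + 1)) x))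
          ((leftInv T ^ (i + 1)) x) : ℂ)).re)
        ≤ ‖x‖ ^ 2 := by
  intro x
  set L : H →L[ℂ] H := leftInv T with hLdef
  set R : H →L[ℂ] H := Ring.inverse (adjoint T * T) with hRdef
  have hSsa : adjoint (adjoint T * T) = adjoint T * T := by
    simp [← star_eq_adjoint, star_mul, star_star]
  have hRsa : adjoint R = R := by
    rw [hRdef, ← star_eq_adjoint, ← Ring.inverse_star, star_eq_adjoint, hSsa]
  have hLT : L * T = 1 := by
    rw [hLdef, leftInv, mul_assoc, ← hRdef]
    exact Ring.inverse_mul_cancel _ hT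
  set P : H →L[ℂ] H := T * L with hPdef
  have hRsa' : star R = R := by rw [star_eq_adjoint]; exact hRsa
  have hPadj : adjoint P = P := by
    rw [hPdef, hLdef, leftInv, ← hRdef, ← star_eq_adjoint]
    simp only [star_mul, star_star, hRsa']
    rw [star_eq_adjoint, star_eq_adjoint, adjoint_adjoint, mul_assoc]
  have hPP : P * P = P := by
    rw [hPdef, mul_assoc, ← mul_assoc L T, hLT, one_mul]
  have hPnorm : ∀ y : H, ‖P y‖ ≤ ‖y‖ := by
    intro y
    have h1 : (inner ℂ (P y) (P y) : ℂ) = inner ℂ (P y) y := by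
      calc (inner ℂ (P y) (P y) : ℂ) = inner ℂ (adjoint P (P y)) y := by
            rw [adjoint_inner_left]
        _ = inner ℂ (P y) y := by
            rw [hPadj]
            have : P (P y) = P y := by
              have := congrArg (fun A : H →L[ℂ] H => A y) hPP
              simpa using this
            rw [this]
    have h2 : (‖P y‖ : ℝ) ^ 2 = ‖(inner ℂ (P y) y : ℂ)‖ := by
      rw [← h1, inner_self_eq_norm_sq_to_K]
      simp [pow_two]
    have h3 : ‖(inner ℂ (P y) y : ℂ)‖ ≤ ‖P y‖ * ‖y‖ := norm_inner_le_norm _ _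
    nlinarith [norm_nonneg (P y), norm_nonneg y]
  set y : ℕ → H := fun i => (L ^ i) x with hy
  set f : ℕ → ℝ := fun i =>
    ((inner ℂ (((adjoint T * T - 1)) ((L ^ (i + 1)) x)) ((L ^ (i + 1)) x) : ℂ)).re with hf
  have hfeq : ∀ i, f i = ‖T (y (i + 1))‖ ^ 2 - ‖y (i + 1)‖ ^ 2 := by
    intro i
    have : (inner ℂ (((adjoint T * T - 1)) (y (i + 1))) (y (i + 1)) : ℂ)
        = ((‖T (y (i + 1))‖ ^ 2 - ‖y (i + 1)‖ ^ 2 : ℝ) : ℂ) := by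
      rw [sub_apply, ContinuousLinearMap.one_apply, inner_sub_left]
      rw [ContinuousLinearMap.mul_apply, adjoint_inner_left, inner_self_eq_norm_sq_to_K,
        inner_self_eq_norm_sq_to_K]
      norm_cast
    simp only [hf, hy] at *
    rw [this, Complex.ofReal_re]
  have hfnonneg : ∀ i, 0 ≤ f i := by
    intro i
    rw [hfeq i]
    have := hexp (y (i + 1))
    nlinarith [norm_nonneg (y (i + 1))]
  have hTy : ∀ i, T (y (i + 1)) = P (y i) := by
    intro i
    simp only [hy, hPdef]
    rw [pow_succ']
    simp [mul_apply]
  have hfle : ∀ i, f i ≤ ‖y i‖ ^ 2 - ‖y (i + 1)‖ ^ 2 := by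
    intro i
    rw [hfeq i, hTy i]
    have := hPnorm (y i)
    nlinarith [norm_nonneg (P (y i)), norm_nonneg (y i)]
  have hbound : ∀ n, ∑ i ∈ Finset.range n, f i ≤ ‖x‖ ^ 2 := by
    intro n
    calc ∑ i ∈ Finset.range n, f i
        ≤ ∑ i ∈ Finset.range n, (‖y i‖ ^ 2 - ‖y (i + 1)‖ ^ 2) :=
          Finset.sum_le_sum fun i _ => hfle i
      _ = ‖y 0‖ ^ 2 - ‖y n‖ ^ 2 := by
          rw [Finset.sum_range_sub' (fun i => ‖y i‖ ^ 2) n]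
      _ ≤ ‖x‖ ^ 2 := by
          have : y 0 = x := by simp [hy]
          rw [this]
          nlinarith [norm_nonneg (y n)]
  exact Real.tsum_le_of_sum_range_le hfnonneg hbound
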